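/- If H is a 2-connected graph with at least two edges, then for all n ≥ e(H) there exists an (H, H[n])-partite-saturated subgraph of H[n] with at most 2·e(H)²·n − e(H)³ edges; in particular satp(H, H[n]) = O(n). -/

import Mathlib

open SimpleGraph

/-- The blow-up `H[n]` of a graph `H` onto parts of size `n`: each vertex of `H` is
replaced by an independent set of size `n`, each edge by a complete bipartite graph. -/
def blowup {V : Type*} (H : SimpleGraph V) (n : ℕ) : SimpleGraph (V × Fin n) :=
  SimpleGraph.comap Prod.fst H

/-- `f` selects one vertex in each part of the blow-up, forming a partite copy of `H` in `G`. -/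
def IsPartiteCopy {V : Type*} {n : ℕ} (H : SimpleGraph V) (G : SimpleGraph (V × Fin n))
    (f : V → Fin n) : Prop :=
  ∀ ⦃u v : V⦄, H.Adj u v → G.Adj (u, f u) (v, f v)

/-- `G ⊆ H[n]` is `(H,H[n])`-partite-saturated: it has no partite copy of `H`, but adding
any edge of `H[n]` not in `G` creates a partite copy of `H`. -/
def PartiteSaturated {V : Type*} {n : ℕ} (H : SimpleGraph V)
    (G : SimpleGraph (V × Fin n)) : Prop :=
  G ≤ blowup H n ∧ (¬ ∃ f, IsPartiteCopy H G f) ∧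
    ∀ ⦃x y : V × Fin n⦄, (blowup H n).Adj x y → ¬ G.Adj x y →
      ∃ f, IsPartiteCopy H (G ⊔ SimpleGraph.fromEdgeSet {s(x, y)}) f

/-- The degree of a vertex. -/
noncomputable def deg {α : Type*} (G : SimpleGraph α) (v : α) : ℕ := (G.neighborSet v).ncard

/-- A graph is `2`-connected if it has at least `3` vertices and removing any single
vertex leaves it connected. -/
def TwoConnected {V : Type*} [Fintype V] (H : SimpleGraph V) : Prop :=
  3 ≤ Fintype.card V ∧ ∀ v : V, (H.induce {u : V | u ≠ v}).Connected

section Aux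

variable {V : Type*}

/-- the special value in `Fin n` attached to an edge of `H`. -/
private def lab {H : SimpleGraph V} {n k : ℕ} (hkn : k ≤ n) (c : H.edgeSet ≃ Fin k)
    (ε : H.edgeSet) : Fin n := Fin.castLE hkn (c ε)

private lemma lab_lt {H : SimpleGraph V} {n k : ℕ} (hkn : k ≤ n) (c : H.edgeSet ≃ Fin k)
    (ε : H.edgeSet) : ((lab hkn c ε : Fin n) : ℕ) < k := (c ε).2

/-- template adjacency predicate -/
private def tmpl {n k : ℕ} (H : SimpleGraph V) (hkn : k ≤ n) (c : H.edgeSet ≃ Fin k)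
    (p q : V × Fin n) : Prop :=
  ∃ ε : H.edgeSet,
    (p.2 = lab hkn c ε ∧ q.2 = lab hkn c ε ∧ p.1 ∉ (ε : Sym2 V) ∧ q.1 ∉ (ε : Sym2 V)) ∨
    (p.1 ∈ (ε : Sym2 V) ∧ q.1 ∉ (ε : Sym2 V) ∧ k ≤ (p.2 : ℕ) ∧ q.2 = lab hkn c ε) ∨
    (q.1 ∈ (ε : Sym2 V) ∧ p.1 ∉ (ε : Sym2 V) ∧ k ≤ (q.2 : ℕ) ∧ p.2 = lab hkn c ε)

private lemma tmpl_symm {n k : ℕ} {H : SimpleGraph V} {hkn : k ≤ n} {c : H.edgeSet ≃ Fin k}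
    {p q : V × Fin n} (h : tmpl H hkn c p q) : tmpl H hkn c q p := by
  obtain ⟨ε, h | h | h⟩ := h
  · exact ⟨ε, Or.inl ⟨h.2.1, h.1, h.2.2.2, h.2.2.1⟩⟩
  · exact ⟨ε, Or.inr (Or.inr h)⟩
  · exact ⟨ε, Or.inr (Or.inl h)⟩

/-- the base (template) graph -/
private def G0 (H : SimpleGraph V) {n k : ℕ} (hkn : k ≤ n) (c : H.edgeSet ≃ Fin k) :
    SimpleGraph (V × Fin n) where
  Adj p q := H.Adj p.1 q.1 ∧ tmpl H hkn c p q
  symm := ⟨fun p q h => ⟨h.1.symm, tmpl_symm h.2⟩⟩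
  loopless := ⟨fun p h => H.loopless.irrefl p.1 h.1⟩

/-- the "stripe" graph: blow-up edges with at least one special coordinate -/
private def Stripe (H : SimpleGraph V) (n k : ℕ) : SimpleGraph (V × Fin n) where
  Adj p q := H.Adj p.1 q.1 ∧ ((p.2 : ℕ) < k ∨ (q.2 : ℕ) < k)
  symm := ⟨fun p q h => ⟨h.1.symm, h.2.symm⟩⟩
  loopless := ⟨fun p h => H.loopless.irrefl p.1 h.1⟩

private lemma g0_le_stripe {H : SimpleGraph V} {n k : ℕ} (hkn : k ≤ n)
    (c : H.edgeSet ≃ Fin k) : G0 H hkn c ≤ Stripe H n k := by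
  intro p q h
  obtain ⟨h1, ε, h2 | h2 | h2⟩ := h
  · exact ⟨h1, Or.inl (by rw [h2.1]; exact lab_lt hkn c ε)⟩
  · exact ⟨h1, Or.inr (by rw [h2.2.2.2]; exact lab_lt hkn c ε)⟩
  · exact ⟨h1, Or.inl (by rw [h2.2.2.2]; exact lab_lt hkn c ε)⟩

private lemma ncard_prod' {α β : Type*} (s : Set α) (t : Set β) :
    (s ×ˢ t).ncard = s.ncard * t.ncard := by
  rw [← Nat.card_coe_set_eq, ← Nat.card_coe_set_eq, ← Nat.card_coe_set_eq,
    Nat.card_congr (Equiv.Set.prod s t), Nat.card_prod]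

private lemma edge_repr {H : SimpleGraph V} (ε : H.edgeSet) :
    ∃ u v, (ε : Sym2 V) = s(u, v) ∧ H.Adj u v := by
  obtain ⟨z, hz⟩ := ε
  induction z with
  | _ u v => exact ⟨u, v, rfl, hz⟩

private lemma twoConnected_connected [Fintype V] {H : SimpleGraph V} (h : TwoConnected H) :
    H.Connected := by
  classical
  have hcard := h.1
  have hne : Nonempty V := Fintype.card_pos_iff.mp (by omega)
  refine ⟨fun x y => ?_⟩
  by_cases hxy : x = y
  · exact hxy ▸ Reachable.refl x
  · have hv : ∃ v : V, v ≠ x ∧ v ≠ y := by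
      have h2 : ({x, y} : Finset V).card ≤ 2 := by
        apply le_trans (Finset.card_insert_le _ _); simp
      have : (({x, y} : Finset V)ᶜ).Nonempty := by
        rw [← Finset.card_pos, Finset.card_compl]; omega
      obtain ⟨v, hv⟩ := this
      rw [Finset.mem_compl, Finset.mem_insert, Finset.mem_singleton] at hv
      exact ⟨v, fun h => hv (Or.inl h), fun h => hv (Or.inr h)⟩
    obtain ⟨v, hvx, hvy⟩ := hv
    have hr := (h.2 v).preconnected ⟨x, Ne.symm hvx⟩ ⟨y, Ne.symm hvy⟩
    exact hr.map (SimpleGraph.Embedding.induce {u : V | u ≠ v}).toHom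

private lemma connected_exists_adj [Fintype V] {H : SimpleGraph V} (hconn : H.Connected)
    (hcard : 2 ≤ Fintype.card V) (a : V) : ∃ y, H.Adj a y := by
  obtain ⟨b, hb⟩ := Fintype.exists_ne_of_one_lt_card (by omega) a
  obtain ⟨w⟩ := hconn.preconnected a b
  cases w with
  | nil => exact absurd rfl hb
  | cons h p => exact ⟨_, h⟩

/-- The key combinatorial lemma : the template graph contains no partite copy of `H`. -/
private lemma g0_copyFree [Fintype V] {H : SimpleGraph V} (h2c : TwoConnected H)
    {n k : ℕ} (hk : 0 < k) (hkn : k ≤ n) (c : H.edgeSet ≃ Fin k) (f : V → Fin n) :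
    ¬ IsPartiteCopy H (G0 H hkn c) f := by
  intro hf
  have hconn : H.Connected := twoConnected_connected h2c
  set m : V → H.edgeSet := fun x => c.symm ⟨(f x : ℕ) % k, Nat.mod_lt _ hk⟩ with hm
  have hmx : ∀ {x : V} {ε : H.edgeSet}, (f x : ℕ) < k → f x = lab hkn c ε → m x = ε := by
    intro x ε hlt heq
    have hval : ((f x : ℕ)) = (c ε : ℕ) := by rw [heq]; rfl
    have : (⟨(f x : ℕ) % k, Nat.mod_lt _ hk⟩ : Fin k) = c ε := by
      apply Fin.ext
      simp only [Nat.mod_eq_of_lt hlt, hval]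
      exact Nat.mod_eq_of_lt (c ε).2
    rw [hm]; simp only []
    rw [this]; exact c.symm_apply_apply ε
  have hclause : ∀ {x y : V}, H.Adj x y → tmpl H hkn c (x, f x) (y, f y) := fun h => (hf h).2
  have hstep0 : ∀ {x y : V}, H.Adj x y → k ≤ (f x : ℕ) → k ≤ (f y : ℕ) → False := by
    intro x y hxy hx hy
    obtain ⟨ε, h | h | h⟩ := hclause hxy
    · have h1 : f x = lab hkn c ε := h.1
      have := lab_lt hkn c ε; rw [← h1] at this; omega
    · have h1 : f y = lab hkn c ε := h.2.2.2
      have := lab_lt hkn c ε; rw [← h1] at this; omega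
    · have h1 : f x = lab hkn c ε := h.2.2.2
      have := lab_lt hkn c ε; rw [← h1] at this; omega
  have hstep1 : ∀ {x y : V}, H.Adj x y → (f x : ℕ) < k → (f y : ℕ) < k →
      m y = m x ∧ x ∉ ((m x : H.edgeSet) : Sym2 V) ∧ y ∉ ((m x : H.edgeSet) : Sym2 V) := by
    intro x y hxy hx hy
    obtain ⟨ε, h | h | h⟩ := hclause hxy
    · have h1 : m x = ε := hmx hx h.1
      have h2 : m y = ε := hmx hy h.2.1
      rw [h1, h2]; exact ⟨rfl, h.2.2.1, h.2.2.2⟩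
    · have h1 : k ≤ ((f x : Fin n) : ℕ) := h.2.2.1
      omega
    · have h1 : k ≤ ((f y : Fin n) : ℕ) := h.2.2.1
      omega
  have hstep2 : ∀ {x y : V}, H.Adj x y → k ≤ (f x : ℕ) → (f y : ℕ) < k →
      x ∈ ((m y : H.edgeSet) : Sym2 V) ∧ y ∉ ((m y : H.edgeSet) : Sym2 V) := by
    intro x y hxy hx hy
    obtain ⟨ε, h | h | h⟩ := hclause hxy
    · have h1 : f x = lab hkn c ε := h.1
      have := lab_lt hkn c ε; rw [← h1] at this; omega
    · have hy' : m y = ε := hmx hy h.2.2.2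
      rw [hy']; exact ⟨h.1, h.2.1⟩
    · have h1 : k ≤ ((f y : Fin n) : ℕ) := h.2.2.1
      omega
  by_cases hA : ∀ x, (f x : ℕ) < k
  · -- no vertex is non-special: global constancy and contradiction
    have hconst : ∀ x y, Relation.ReflTransGen H.Adj x y → m y = m x := by
      intro x y h
      induction h with
      | refl => rfl
      | tail _ hbc ih => rw [(hstep1 hbc (hA _) (hA _)).1, ih]
    -- some vertex
    obtain ⟨u0, v0, _, hadj0⟩ := edge_repr (c.symm ⟨0, hk⟩)
    obtain ⟨p, q, hpq, hadjpq⟩ := edge_repr (m u0)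
    have hmp : m p = m u0 := hconst u0 p ((reachable_iff_reflTransGen _ _).mp
      (hconn.preconnected u0 p))
    have h1 := hstep1 hadjpq (hA p) (hA q)
    exact h1.2.1 (by rw [hmp, hpq]; exact Sym2.mem_mk_left p q)
  · push_neg at hA
    obtain ⟨a, ha⟩ := hA
    have ha' : k ≤ (f a : ℕ) := by omega
    obtain ⟨y, hay⟩ := connected_exists_adj hconn (by have := h2c.1; omega) a
    have hy : (f y : ℕ) < k := by
      by_contra h; exact hstep0 hay ha' (by omega)
    obtain ⟨hmem, hymem⟩ := hstep2 hay ha' hy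
    obtain ⟨z, hz⟩ := Sym2.mem_iff_exists.mp hmem
    have hAdjaz : H.Adj a z := by
      have := (m y).2; rw [hz] at this; exact this
    have hza : z ≠ a := fun h => H.loopless.irrefl a (h ▸ hAdjaz)
    have hzy : z ≠ y := by
      rintro rfl; exact hymem (by rw [hz]; exact Sym2.mem_mk_right _ _)
    have hzk : (f z : ℕ) < k := by
      by_contra h; exact hstep0 hAdjaz ha' (by omega)
    have hya : y ≠ a := by rintro rfl; omega
    set R : V → V → Prop := fun p q => H.Adj p q ∧ (f q : ℕ) < k with hR
    have hK : ∀ w, Relation.ReflTransGen R y w → ((f w : ℕ) < k ∧ m w = m y) := by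
      intro w h
      induction h with
      | refl => exact ⟨hy, rfl⟩
      | tail _ hbc ih =>
        exact ⟨hbc.2, by rw [(hstep1 hbc.1 ih.1 hbc.2).1, ih.2]⟩
    have hKz : ¬ Relation.ReflTransGen R y z := by
      intro h
      rcases Relation.ReflTransGen.cases_tail h with h1 | ⟨b, hb, hbz⟩
      · exact hzy h1
      · have hb' := hK b hb
        have h3 := hstep1 hbz.1 hb'.1 hbz.2
        -- h3 : m z = m b ∧ b ∉ m b ∧ z ∉ m b
        exact h3.2.2 (by rw [hb'.2, hz]; exact Sym2.mem_mk_right a z)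
    apply hKz
    have hreach := (h2c.2 a).preconnected ⟨y, hya⟩ ⟨z, hza⟩
    rw [reachable_iff_reflTransGen] at hreach
    have hmain : ∀ s : {u : V | u ≠ a},
        Relation.ReflTransGen (H.induce {u : V | u ≠ a}).Adj ⟨y, hya⟩ s →
        Relation.ReflTransGen R y (s : V) := by
      intro s h
      induction h with
      | refl => exact Relation.ReflTransGen.refl
      | @tail b s' _ hbc ih =>
        have hadj : H.Adj (b : V) (s' : V) := hbc
        have hbK := hK _ ih
        have hfs : (f (s' : V) : ℕ) < k := by
          by_contra hcon
          have hss := hstep2 hadj.symm (by omega) hbK.1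
          have hmem2 : (s' : V) ∈ ((m (b : V) : H.edgeSet) : Sym2 V) := hss.1
          rw [hbK.2, hz] at hmem2
          rcases Sym2.mem_iff.mp hmem2 with h' | h'
          · exact s'.2 h'
          · rw [h'] at hcon; omega
        exact Relation.ReflTransGen.tail ih ⟨hadj, hfs⟩
    exact hmain _ hreach

/-- Counting: the stripe graph has at most `2k²n - k³` edges. -/
private lemma stripe_count [Fintype V] {H : SimpleGraph V} {n k d : ℕ} (hd : n = k + d)
    (hk : 0 < k) (hcard : H.edgeSet.ncard = k) :
    (Stripe H n k).edgeSet.ncard ≤ 2 * k ^ 2 * n - k ^ 3 := by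
  classical
  letI : LinearOrder V := LinearOrder.lift' (Fintype.equivFin V) (Equiv.injective _)
  have hkn : k ≤ n := by omega
  set σ : V × Fin n → V × Fin n → Sym2 V × (Fin n × Fin n) := fun p q =>
    (s(p.1, q.1), if p.1 < q.1 then (p.2, q.2) else if q.1 < p.1 then (q.2, p.2)
      else (min p.2 q.2, max p.2 q.2)) with hσdef
  have hσ : ∀ p q, σ p q = σ q p := by
    intro p q
    rcases lt_trichotomy p.1 q.1 with h | h | h
    · simp only [hσdef, if_pos h, if_neg (asymm h), Sym2.eq_swap]
    · simp only [hσdef, h, lt_irrefl, if_neg, Sym2.eq_swap, min_comm, max_comm, if_false]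
    · simp only [hσdef, if_pos h, if_neg (asymm h), Sym2.eq_swap]
  set F : Sym2 (V × Fin n) → Sym2 V × (Fin n × Fin n) := Sym2.lift ⟨σ, hσ⟩ with hF
  have hFval : ∀ p q : V × Fin n, p.1 < q.1 → F s(p, q) = (s(p.1, q.1), (p.2, q.2)) := by
    intro p q h
    rw [hF, Sym2.lift_mk]
    simp only [hσdef, if_pos h]
  have hrepr : ∀ e ∈ (Stripe H n k).edgeSet, ∃ p q : V × Fin n,
      e = s(p, q) ∧ (Stripe H n k).Adj p q ∧ p.1 < q.1 := by
    intro e he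
    induction e with
    | _ p q =>
      have hadj : (Stripe H n k).Adj p q := he
      have hne : p.1 ≠ q.1 := hadj.1.ne
      rcases lt_or_gt_of_ne hne with h | h
      · exact ⟨p, q, rfl, hadj, h⟩
      · exact ⟨q, p, Sym2.eq_swap, hadj.symm, h⟩
  have hinj : Set.InjOn F (Stripe H n k).edgeSet := by
    intro e1 h1 e2 h2 heq
    obtain ⟨p, q, rfl, hadj, hpq⟩ := hrepr _ h1
    obtain ⟨p', q', rfl, hadj', hpq'⟩ := hrepr _ h2
    rw [hFval p q hpq, hFval p' q' hpq'] at heq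
    have h1' : s(p.1, q.1) = s(p'.1, q'.1) := congrArg Prod.fst heq
    have h2' : (p.2, q.2) = (p'.2, q'.2) := congrArg Prod.snd heq
    rcases Sym2.eq_iff.mp h1' with ⟨ha, hb⟩ | ⟨ha, hb⟩
    · obtain ⟨hc1, hc2⟩ := Prod.mk_inj.mp h2'
      have hp : p = p' := Prod.ext_iff.mpr ⟨ha, hc1⟩
      have hq : q = q' := Prod.ext_iff.mpr ⟨hb, hc2⟩
      rw [hp, hq]
    · exfalso
      rw [← ha, ← hb] at hpq'
      exact absurd (hpq.trans hpq') (lt_irrefl _)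
  set Bad : Set (Fin n × Fin n) := {p | (p.1 : ℕ) < k ∨ (p.2 : ℕ) < k} with hBad
  have himg : F '' (Stripe H n k).edgeSet ⊆ H.edgeSet ×ˢ Bad := by
    rintro x ⟨e, he, rfl⟩
    obtain ⟨p, q, rfl, hadj, hpq⟩ := hrepr _ he
    rw [hFval p q hpq]
    refine ⟨hadj.1, ?_⟩
    simpa [hBad] using hadj.2
  -- cardinality of Bad
  have hsub1 : {i : Fin n | (i : ℕ) < k}.ncard = k := by
    have E : {i : Fin n | (i : ℕ) < k} ≃ Fin k :=
      { toFun := fun x => ⟨(x : Fin n), x.2⟩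
        invFun := fun j => ⟨⟨(j : ℕ), by omega⟩, by simp [Set.mem_setOf_eq]⟩
        left_inv := fun x => Subtype.ext (Fin.ext rfl)
        right_inv := fun j => Fin.ext rfl }
    rw [← Nat.card_coe_set_eq, Nat.card_congr E, Nat.card_eq_fintype_card, Fintype.card_fin]
  have hsub2 : {i : Fin n | k ≤ (i : ℕ)}.ncard = d := by
    have E : {i : Fin n | k ≤ (i : ℕ)} ≃ Fin d :=
      { toFun := fun x => ⟨(x : Fin n) - k, by
          have h1 : ((x : Fin n) : ℕ) < n := (x : Fin n).2
          have h2 : k ≤ ((x : Fin n) : ℕ) := x.2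
          omega⟩
        invFun := fun j => ⟨⟨k + (j : ℕ), by omega⟩, by simp [Set.mem_setOf_eq]⟩
        left_inv := fun x => Subtype.ext (Fin.ext (by
          have h2 : k ≤ ((x : Fin n) : ℕ) := x.2
          simp; omega))
        right_inv := fun j => Fin.ext (by simp) }
    rw [← Nat.card_coe_set_eq, Nat.card_congr E, Nat.card_eq_fintype_card, Fintype.card_fin]
  have hbadcard : Bad.ncard = k * n + d * k := by
    have hsplit : Bad = ({i : Fin n | (i : ℕ) < k} ×ˢ (Set.univ : Set (Fin n))) ∪
        ({i : Fin n | k ≤ (i : ℕ)} ×ˢ {j : Fin n | (j : ℕ) < k}) := by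
      ext p
      simp only [hBad, Set.mem_setOf_eq, Set.mem_union, Set.mem_prod, Set.mem_univ, and_true]
      constructor
      · intro h; by_cases h1 : (p.1 : ℕ) < k
        · exact Or.inl h1
        · exact Or.inr ⟨by omega, by omega⟩
      · rintro (h | ⟨h1, h2⟩)
        · exact Or.inl h
        · exact Or.inr h2
    rw [hsplit, Set.ncard_union_eq ?_ (Set.toFinite _) (Set.toFinite _)]
    · rw [ncard_prod', ncard_prod', hsub1, hsub2, Set.ncard_univ, Nat.card_eq_fintype_card,
        Fintype.card_fin]
    · rw [Set.disjoint_left]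
      rintro p ⟨h1, -⟩ ⟨h2, -⟩
      simp only [Set.mem_setOf_eq] at h1 h2
      omega
  have hcount : (Stripe H n k).edgeSet.ncard ≤ k * (k * n + d * k) := by
    calc (Stripe H n k).edgeSet.ncard = (F '' (Stripe H n k).edgeSet).ncard :=
          (Set.ncard_image_of_injOn hinj).symm
      _ ≤ (H.edgeSet ×ˢ Bad).ncard := Set.ncard_le_ncard himg (Set.toFinite _)
      _ = k * (k * n + d * k) := by rw [ncard_prod', hcard, hbadcard]
  have harith : k * (k * n + d * k) = 2 * k ^ 2 * n - k ^ 3 := by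
    subst hd
    have h1 : 2 * k ^ 2 * (k + d) = k ^ 3 + (k ^ 3 + 2 * (k ^ 2 * d)) := by ring
    have h2 : k * (k * (k + d) + d * k) = k ^ 3 + 2 * (k ^ 2 * d) := by ring
    rw [h1, h2, Nat.add_sub_cancel_left]
  omega

end Aux

/-- If `H` is `2`-connected with at least two edges, then for all `n ≥ e(H)` there is an
`(H,H[n])`-partite-saturated subgraph of `H[n]` with at most `2e(H)²n - e(H)³` edges. -/
theorem stmt_11 {V : Type*} [Fintype V] (H : SimpleGraph V) (h2c : TwoConnected H)
    (he : 2 ≤ H.edgeSet.ncard) (n : ℕ) (hn : H.edgeSet.ncard ≤ n) :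
    ∃ G : SimpleGraph (V × Fin n), PartiteSaturated H G ∧
      G.edgeSet.ncard ≤ 2 * H.edgeSet.ncard ^ 2 * n - H.edgeSet.ncard ^ 3 := by
  classical
  set k := H.edgeSet.ncard with hkdef
  have hk : 0 < k := by omega
  have hkn : k ≤ n := hn
  haveI : Fintype ↥H.edgeSet := H.edgeSet.toFinite.fintype
  have hcard : Fintype.card ↥H.edgeSet = k := by
    rw [hkdef, Set.ncard_eq_toFinset_card']
    exact (Set.toFinset_card _).symm
  set c : ↥H.edgeSet ≃ Fin k := Fintype.equivFinOfCardEq hcard with hc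
  set A := G0 H hkn c with hAdef
  set B := Stripe H n k with hBdef
  have hAB : A ≤ B := g0_le_stripe hkn c
  have hAcf : ∀ f, ¬ IsPartiteCopy H A f := g0_copyFree h2c hk hkn c
  have hBblow : B ≤ blowup H n := fun p q h => h.1
  set P : SimpleGraph (V × Fin n) → Prop :=
    fun G' => A ≤ G' ∧ G' ≤ B ∧ ∀ f, ¬ IsPartiteCopy H G' f with hPdef
  set S : Set ℕ := {m | ∃ G', P G' ∧ G'.edgeSet.ncard = m} with hSdef
  have hSne : A.edgeSet.ncard ∈ S := ⟨A, ⟨le_refl _, hAB, hAcf⟩, rfl⟩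
  have hSbdd : BddAbove S := by
    refine ⟨B.edgeSet.ncard, ?_⟩
    rintro m ⟨G', hG', rfl⟩
    exact Set.ncard_le_ncard (edgeSet_mono hG'.2.1) B.edgeSet.toFinite
  have hmem := Nat.sSup_mem ⟨_, hSne⟩ hSbdd
  obtain ⟨G, hPG, hGcard⟩ := hmem
  refine ⟨G, ⟨le_trans hPG.2.1 hBblow, ?_, ?_⟩, ?_⟩
  · rintro ⟨f, hf⟩
    exact hPG.2.2 f hf
  · rintro ⟨u, i⟩ ⟨v, j⟩ hxy hnadj
    have hHuv : H.Adj u v := hxy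
    by_cases hsp : (i : ℕ) < k ∨ (j : ℕ) < k
    · -- stripe case : use maximality
      by_contra hno
      push_neg at hno
      set G' := G ⊔ SimpleGraph.fromEdgeSet {s((u, i), (v, j))} with hG'def
      have hne : ((u, i) : V × Fin n) ≠ (v, j) := by
        intro h; exact hHuv.ne (congrArg Prod.fst h)
      have hG'adj : G'.Adj (u, i) (v, j) := by
        rw [hG'def, sup_adj]
        exact Or.inr ⟨rfl, hne⟩
      have hlt : G < G' := by
        refine lt_of_le_of_ne le_sup_left ?_
        intro h
        exact hnadj (h ▸ hG'adj)
      have hG'B : G' ≤ B := by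
        rw [hG'def]
        refine sup_le hPG.2.1 ?_
        intro p q hpq
        rw [fromEdgeSet_adj] at hpq
        obtain ⟨hmem', hne'⟩ := hpq
        rw [Set.mem_singleton_iff, Sym2.eq_iff] at hmem'
        rcases hmem' with ⟨h1, h2⟩ | ⟨h1, h2⟩
        · rw [h1, h2]; exact ⟨hHuv, hsp⟩
        · rw [h1, h2]; exact Adj.symm ⟨hHuv, hsp⟩
      have hP' : P G' := ⟨le_trans hPG.1 le_sup_left, hG'B, hno⟩
      have hmem2 : G'.edgeSet.ncard ∈ S := ⟨G', hP', rfl⟩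
      have hle := le_csSup hSbdd hmem2
      have hlt2 : G.edgeSet.ncard < G'.edgeSet.ncard :=
        Set.ncard_lt_ncard (edgeSet_ssubset_edgeSet.mpr hlt) G'.edgeSet.toFinite
      omega
    · -- template case
      push_neg at hsp
      have hi : k ≤ (i : ℕ) := by omega
      have hj : k ≤ (j : ℕ) := by omega
      have hε : s(u, v) ∈ H.edgeSet := hHuv
      set ε₀ : ↥H.edgeSet := ⟨s(u, v), hε⟩ with hε₀
      have hne_uv : u ≠ v := hHuv.ne
      set fc : V → Fin n := fun w => if w = u then i else if w = v then j else lab hkn c ε₀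
        with hfc
      have hfu : fc u = i := by rw [hfc]; simp
      have hfv : fc v = j := by rw [hfc]; simp [Ne.symm hne_uv]
      have hfo : ∀ w, w ≠ u → w ≠ v → fc w = lab hkn c ε₀ := by
        intro w h1 h2; rw [hfc]; simp [h1, h2]
      refine ⟨fc, ?_⟩
      intro a b hab
      have hab_ne : a ≠ b := hab.ne
      have hAG : A ≤ G ⊔ SimpleGraph.fromEdgeSet {s(((u, i) : V × Fin n), (v, j))} :=
        le_trans hPG.1 le_sup_left
      have hmemu : u ∈ (ε₀ : Sym2 V) := Sym2.mem_mk_left u v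
      have hmemv : v ∈ (ε₀ : Sym2 V) := Sym2.mem_mk_right u v
      have hnotmem : ∀ w : V, w ≠ u → w ≠ v → w ∉ (ε₀ : Sym2 V) := by
        intro w h1 h2 hcon
        rcases Sym2.mem_iff.mp hcon with h | h
        · exact h1 h
        · exact h2 h
      have haddadj : (G ⊔ SimpleGraph.fromEdgeSet {s(((u, i) : V × Fin n), (v, j))}).Adj
          (u, i) (v, j) := by
        rw [sup_adj, fromEdgeSet_adj]
        exact Or.inr ⟨rfl, fun h => hne_uv (congrArg Prod.fst h)⟩
      by_cases hau : a = u
      · rw [hau] at hab ⊢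
        by_cases hbv : b = v
        · rw [hbv] at hab ⊢
          rw [hfu, hfv]
          exact haddadj
        · have hbu : b ≠ u := hab.ne'
          rw [hfu, hfo b hbu hbv]
          exact hAG ⟨hab, ε₀, Or.inr (Or.inl ⟨hmemu, hnotmem b hbu hbv, hi, rfl⟩)⟩
      · by_cases hav : a = v
        · rw [hav] at hab ⊢
          by_cases hbu : b = u
          · rw [hbu] at hab ⊢
            rw [hfu, hfv]
            exact haddadj.symm
          · have hbv : b ≠ v := hab.ne'
            rw [hfv, hfo b hbu hbv]
            exact hAG ⟨hab, ε₀, Or.inr (Or.inl ⟨hmemv, hnotmem b hbu hbv, hj, rfl⟩)⟩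
        · by_cases hbu : b = u
          · rw [hbu] at hab ⊢
            rw [hfu, hfo a hau hav]
            exact hAG ⟨hab, ε₀, Or.inr (Or.inr ⟨hmemu, hnotmem a hau hav, hi, rfl⟩)⟩
          · by_cases hbv : b = v
            · rw [hbv] at hab ⊢
              rw [hfv, hfo a hau hav]
              exact hAG ⟨hab, ε₀, Or.inr (Or.inr ⟨hmemv, hnotmem a hau hav, hj, rfl⟩)⟩
            · rw [hfo a hau hav, hfo b hbu hbv]
              exact hAG ⟨hab, ε₀, Or.inl ⟨rfl, rfl, hnotmem a hau hav, hnotmem b hbu hbv⟩⟩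
  · -- counting
    obtain ⟨d, hd⟩ : ∃ d, n = k + d := ⟨n - k, by omega⟩
    have h1 : G.edgeSet.ncard ≤ B.edgeSet.ncard :=
      Set.ncard_le_ncard (edgeSet_mono hPG.2.1) B.edgeSet.toFinite
    have h2 : B.edgeSet.ncard ≤ 2 * k ^ 2 * n - k ^ 3 := stripe_count hd hk hkdef.symm
    omega
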